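/- Let τ > σ ≥ 1 be natural numbers, set a = τ + σ, b = τ − σ, x = b/a, and let ρ₀ ≠ 0. Fix k ∈ ℤ and set μ = π/2 − kπx. Let θ ∈ ℝ and put u = (a/2)·θ − kπ. Assume cos((a/2)·θ) ≠ 0 and sin((b/2)·θ) ≠ 0. Then q̇(θ) = ρ₀(√(τ/σ)·cos(τθ) + √(σ/τ)·cos(σθ)) = 0 if and only if x·tan(u) = tan(μ − x·u). -/

import Mathlib

open Real

/-- Reduction of the extremum condition `q̇(θ) = 0` to the scalar equation
`x tan u = tan(μ − x u)` in the shifted fast phase `u = (a/2)θ − kπ`. -/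
theorem resonant_velocity_zero_iff_reduced
    (τ σ : ℕ) (hσ : 1 ≤ σ) (hτσ : σ < τ) (ρ₀ : ℝ) (hρ₀ : ρ₀ ≠ 0)
    (a b x : ℝ)
    (ha : a = (τ : ℝ) + σ) (hb : b = (τ : ℝ) - σ) (hx : x = b / a)
    (k : ℤ) (μ : ℝ) (hμ : μ = π / 2 - k * π * x)
    (θ u : ℝ) (hu : u = (a / 2) * θ - k * π)
    (hcos : Real.cos ((a / 2) * θ) ≠ 0)
    (hsin : Real.sin ((b / 2) * θ) ≠ 0) :
    ρ₀ * (Real.sqrt ((τ : ℝ) / σ) * Real.cos (τ * θ)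
        + Real.sqrt ((σ : ℝ) / τ) * Real.cos (σ * θ)) = 0
      ↔ x * Real.tan u = Real.tan (μ - x * u) := by
  have hσ1 : (1:ℝ) ≤ (σ:ℝ) := by exact_mod_cast hσ
  have hστ : (σ:ℝ) < (τ:ℝ) := by exact_mod_cast hτσ
  have hσ0 : (0:ℝ) < (σ:ℝ) := by linarith
  have hτ0 : (0:ℝ) < (τ:ℝ) := by linarith
  have ha0 : (0:ℝ) < a := by rw [ha]; linarith
  have ha0' : a ≠ 0 := ne_of_gt ha0
  set α := (a / 2) * θ with hα
  set β := (b / 2) * θ with hβ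
  have hτθ : (τ:ℝ) * θ = α + β := by rw [hα, hβ, ha, hb]; ring
  have hσθ : (σ:ℝ) * θ = α - β := by rw [hα, hβ, ha, hb]; ring
  have hsτ := Real.sq_sqrt hτ0.le
  have hsσ := Real.sq_sqrt hσ0.le
  have hsτ0 : (0:ℝ) < Real.sqrt τ := Real.sqrt_pos.mpr hτ0
  have hsσ0 : (0:ℝ) < Real.sqrt σ := Real.sqrt_pos.mpr hσ0
  have hdiv1 : Real.sqrt ((τ:ℝ)/σ) = Real.sqrt τ / Real.sqrt σ :=
    Real.sqrt_div hτ0.le _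
  have hdiv2 : Real.sqrt ((σ:ℝ)/τ) = Real.sqrt σ / Real.sqrt τ :=
    Real.sqrt_div hσ0.le _
  -- tan u = tan α
  have htanu : Real.tan u = Real.tan α := by
    have : α = u + k * π := by rw [hu]; ring
    rw [this, Real.tan_add_int_mul_pi]
  -- μ - x u = π/2 - β
  have hxα : x * α = β := by
    rw [hx, hα, hβ]; field_simp
  have hμxu : μ - x * u = π / 2 - β := by
    rw [hμ, hu]
    have : x * ((a/2)*θ - k*π) = β - k * π * x := by
      rw [← hxα, hα]; ring
    rw [this]; ring
  have htanμ : Real.tan (μ - x * u) = Real.cos β / Real.sin β := by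
    rw [hμxu, Real.tan_eq_sin_div_cos, Real.sin_pi_div_two_sub, Real.cos_pi_div_two_sub]
  -- LHS rewrite
  have hlhs : Real.sqrt ((τ : ℝ) / σ) * Real.cos (τ * θ)
        + Real.sqrt ((σ : ℝ) / τ) * Real.cos (σ * θ)
      = (a * Real.cos α * Real.cos β - b * Real.sin α * Real.sin β)
        / (Real.sqrt τ * Real.sqrt σ) := by
    rw [hdiv1, hdiv2, hτθ, hσθ, Real.cos_add, Real.cos_sub, ha, hb]
    have e1 : Real.sqrt τ * Real.sqrt τ = τ := Real.mul_self_sqrt hτ0.le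
    have e2 : Real.sqrt σ * Real.sqrt σ = σ := Real.mul_self_sqrt hσ0.le
    field_simp
    linear_combination (Real.cos α * Real.cos β - Real.sin α * Real.sin β) * e1 +
      (Real.cos α * Real.cos β + Real.sin α * Real.sin β) * e2
  rw [hlhs, htanu, htanμ, hx, Real.tan_eq_sin_div_cos]
  constructor
  · intro h
    have h2 : a * Real.cos α * Real.cos β - b * Real.sin α * Real.sin β = 0 := by
      rcases mul_eq_zero.mp h with h | h
      · exact absurd h hρ₀
      · rcases div_eq_zero_iff.mp h with h | h
        · exact h
        · exact absurd h (by positivity)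
    field_simp
    linarith [h2]
  · intro h
    have h2 : a * Real.cos α * Real.cos β - b * Real.sin α * Real.sin β = 0 := by
      field_simp at h
      linarith [h]
    rw [h2, zero_div, mul_zero]
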